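/- Let m be an even positive integer and n = 2m. For the power mapping F(x) = x^{2^m+2} over F_{2^n}, the differential spectrum is given by ω_0 = 2^{n-1}, ω_1 = 0, ω_2 = 2^{n-1}, and ω_i = 0 for all i > 2; in particular δ(b) ∈ {0, 2} for every b ∈ F_{2^n}. -/
import Mathlib


/-- The number of `x` in the field `F` with `(x+1)^d - x^d = b`. -/
def deltaF (F : Type*) [Field F] [Fintype F] [DecidableEq F] (d : ℕ) (b : F) : ℕ :=
  (Finset.univ.filter (fun x : F => (x + 1) ^ d - x ^ d = b)).card

/-- The number of `b` in the field `F` with `deltaF F d b = i`. -/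
def omegaF (F : Type*) [Field F] [Fintype F] [DecidableEq F] (d i : ℕ) : ℕ :=
  (Finset.univ.filter (fun b : F => deltaF F d b = i)).card

/-- Differential spectrum of `x^(2^m+2)` over `F_{2^n}`, `n = 2m`, `m` even. -/
theorem stmt4 (m : ℕ) (hm : 0 < m) (hme : Even m) (n : ℕ) (hn : n = 2 * m)
    (F : Type*) [Field F] [Fintype F] [DecidableEq F]
    (hF : Fintype.card F = 2 ^ n) :
    omegaF F (2 ^ m + 2) 0 = 2 ^ (n - 1) ∧
    omegaF F (2 ^ m + 2) 1 = 0 ∧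
    omegaF F (2 ^ m + 2) 2 = 2 ^ (n - 1) ∧
    (∀ i, 2 < i → omegaF F (2 ^ m + 2) i = 0) ∧
    (∀ b : F, deltaF F (2 ^ m + 2) b ∈ ({0, 2} : Set ℕ)) := by
  -- characteristic 2
  have hchar : CharP F 2 := by
    have hp : (ringChar F).Prime := CharP.char_is_prime F _
    haveI : Fact (ringChar F).Prime := ⟨hp⟩
    obtain ⟨k, hk, hcard⟩ := FiniteField.card F (ringChar F)
    have hd : ringChar F ∣ 2 ^ n := by
      rw [← hF, hcard]; exact dvd_pow_self _ k.pos.ne'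
    have h2 : ringChar F = 2 :=
      (Nat.Prime.eq_one_or_self_of_dvd Nat.prime_two _ (hp.dvd_of_dvd_pow hd)).resolve_left
        hp.ne_one
    exact h2 ▸ ringChar.charP F
  haveI := hchar
  have h2 : (2 : F) = 0 := by exact_mod_cast CharP.cast_eq_zero F 2
  -- the derivative simplifies
  have hexp : ∀ x : F, (x + 1) ^ (2 ^ m + 2) - x ^ (2 ^ m + 2) = x ^ 2 ^ m + x ^ 2 + 1 := by
    intro x
    rw [pow_add, pow_add, add_pow_char_pow]
    linear_combination ((x ^ 2 ^ m) * x + x) * h2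
  -- kernel lemma
  have hker : ∀ z : F, z ^ 2 ^ m = z ^ 2 → z = 0 ∨ z = 1 := by
    intro z hz
    have hc : z ^ 2 ^ n = z := by rw [← hF]; exact FiniteField.pow_card z
    have h4 : z ^ 4 = z := by
      calc z ^ 4 = ((z ^ 2) ^ 2 : F) := by ring
        _ = (z ^ 2 ^ m) ^ 2 := by rw [hz]
        _ = (z ^ 2) ^ 2 ^ m := by rw [← pow_mul, ← pow_mul, Nat.mul_comm]
        _ = (z ^ 2 ^ m) ^ 2 ^ m := by rw [hz]
        _ = z ^ 2 ^ n := by rw [← pow_mul, ← pow_add, hn, two_mul]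
        _ = z := hc
    obtain ⟨k, hk⟩ := hme
    have hiter : ∀ j : ℕ, z ^ 4 ^ j = z := by
      intro j; induction j with
      | zero => simp
      | succ j ih => rw [pow_succ, pow_mul, ih, h4]
    have h2m : z ^ 2 ^ m = z := by
      have : (2 : ℕ) ^ m = 4 ^ k := by
        rw [hk, ← two_mul, pow_mul]; norm_num
      rw [this, hiter]
    have hz2 : z ^ 2 = z := by rw [← hz, h2m]
    have : z * (z - 1) = 0 := by linear_combination hz2
    rcases mul_eq_zero.mp this with h | h
    · exact Or.inl h
    · exact Or.inr (sub_eq_zero.mp h)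
  -- fiber equivalence
  have key : ∀ x y : F,
      ((y + 1) ^ (2 ^ m + 2) - y ^ (2 ^ m + 2) = (x + 1) ^ (2 ^ m + 2) - x ^ (2 ^ m + 2)) ↔
      (y = x ∨ y = x + 1) := by
    intro x y
    rw [hexp, hexp]
    constructor
    · intro h
      have hzz : (y + x) ^ 2 ^ m = (y + x) ^ 2 := by
        rw [add_pow_char_pow]
        have : (y + x) ^ 2 = y ^ 2 + x ^ 2 := by linear_combination (y * x) * h2
        rw [this]
        linear_combination h + (x ^ 2 ^ m - y ^ 2) * h2
      rcases hker _ hzz with h0 | h1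
      · left; linear_combination h0 - x * h2
      · right; linear_combination h1 - x * h2
    · rintro (rfl | rfl)
      · rfl
      · rw [add_pow_char_pow]
        linear_combination (x + 1) * h2
  -- fibers have size 0 or 2
  have hfib : ∀ b : F, deltaF F (2 ^ m + 2) b = 0 ∨ deltaF F (2 ^ m + 2) b = 2 := by
    intro b
    unfold deltaF
    rcases (Finset.univ.filter
        (fun x : F => (x + 1) ^ (2 ^ m + 2) - x ^ (2 ^ m + 2) = b)).eq_empty_or_nonempty with
      h | ⟨x, hx⟩
    · left; simp [h]
    · right
      have hxb : (x + 1) ^ (2 ^ m + 2) - x ^ (2 ^ m + 2) = b := by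
        simpa using hx
      have hset : Finset.univ.filter
          (fun y : F => (y + 1) ^ (2 ^ m + 2) - y ^ (2 ^ m + 2) = b) = {x, x + 1} := by
        ext y
        simp only [Finset.mem_filter, Finset.mem_univ, true_and, Finset.mem_insert,
          Finset.mem_singleton]
        rw [← hxb, key x y]
      rw [hset, Finset.card_pair (fun h => one_ne_zero' F (left_eq_add.mp h))]
  have hn1 : 2 ^ n = 2 * 2 ^ (n - 1) := by
    conv_lhs => rw [show n = (n - 1) + 1 by omega]
    rw [pow_succ]; ring
  -- total sum of fiber sizes
  have hsum : ∑ b : F, deltaF F (2 ^ m + 2) b = 2 ^ n := by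
    simp only [deltaF]
    rw [← hF, ← Finset.card_univ]
    exact (Finset.card_eq_sum_card_fiberwise
      (f := fun x : F => (x + 1) ^ (2 ^ m + 2) - x ^ (2 ^ m + 2)) (t := Finset.univ)
      (fun x _ => Finset.mem_univ _)).symm
  have homega2 : omegaF F (2 ^ m + 2) 2 = 2 ^ (n - 1) := by
    have hsplit := Finset.sum_filter_add_sum_filter_not Finset.univ
      (fun b : F => deltaF F (2 ^ m + 2) b = 2) (fun b => deltaF F (2 ^ m + 2) b)
    have hz : ∑ b ∈ Finset.univ.filter
        (fun b : F => ¬ deltaF F (2 ^ m + 2) b = 2), deltaF F (2 ^ m + 2) b = 0 := by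
      apply Finset.sum_eq_zero
      intro b hb
      rcases hfib b with h | h
      · exact h
      · exact absurd h (Finset.mem_filter.mp hb).2
    have htwo : ∑ b ∈ Finset.univ.filter
        (fun b : F => deltaF F (2 ^ m + 2) b = 2), deltaF F (2 ^ m + 2) b
        = 2 * omegaF F (2 ^ m + 2) 2 := by
      rw [Finset.sum_congr rfl (fun b hb => (Finset.mem_filter.mp hb).2),
        Finset.sum_const, smul_eq_mul, mul_comm]
      rfl
    have : 2 * omegaF F (2 ^ m + 2) 2 = 2 ^ n := by
      rw [← htwo, ← hsum, ← hsplit, hz, add_zero]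
    omega
  have homega0 : omegaF F (2 ^ m + 2) 0 = 2 ^ (n - 1) := by
    have hpart := Finset.card_filter_add_card_filter_not
      (s := Finset.univ) (p := fun b : F => deltaF F (2 ^ m + 2) b = 0)
    have hneg : Finset.univ.filter (fun b : F => ¬ deltaF F (2 ^ m + 2) b = 0)
        = Finset.univ.filter (fun b : F => deltaF F (2 ^ m + 2) b = 2) := by
      apply Finset.filter_congr
      intro b _
      rcases hfib b with h | h <;> simp [h]
    rw [hneg] at hpart
    have : omegaF F (2 ^ m + 2) 0 + omegaF F (2 ^ m + 2) 2 = 2 ^ n := by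
      rw [← hF, ← Finset.card_univ]; exact hpart
    omega
  have hzero : ∀ i, i ≠ 0 → i ≠ 2 → omegaF F (2 ^ m + 2) i = 0 := by
    intro i h0 h2'
    unfold omegaF
    rw [Finset.card_eq_zero, Finset.filter_eq_empty_iff]
    intro b _
    rcases hfib b with h | h <;> omega
  refine ⟨homega0, hzero 1 (by omega) (by omega), homega2,
    fun i hi => hzero i (by omega) (by omega), fun b => ?_⟩
  rcases hfib b with h | h <;> simp [h]
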